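/- Let u : ℝ³ → ℝ be measurable with |u(x)|² ≤ C/(1+|x|⁸) for some C > 0, and let 0 < α < 3. Then there is a constant C' > 0 such that for all x ∈ ℝ³, ∫_{ℝ³} |x-y|^{-α} u(y)² dy ≤ C'/(1+|x|^α). -/

import Mathlib

open MeasureTheory Real

noncomputable section

abbrev V3 := EuclideanSpace ℝ (Fin 3)

namespace Stmt5Aux

open Metric Filter

lemma rpow_add_le_aux {a b α : ℝ} (ha : 0 ≤ a) (hb : 0 ≤ b) (hα : 0 ≤ α) :
    (a + b) ^ α ≤ 2 ^ α * (a ^ α + b ^ α) := by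
  have h2 : (0:ℝ) ≤ 2 ^ α := rpow_nonneg (by norm_num) _
  rcases le_total a b with h | h
  · calc (a + b) ^ α ≤ (2 * b) ^ α := rpow_le_rpow (by linarith) (by linarith) hα
      _ = 2 ^ α * b ^ α := mul_rpow (by norm_num) hb
      _ ≤ 2 ^ α * (a ^ α + b ^ α) := by
          have := rpow_nonneg ha α
          nlinarith
  · calc (a + b) ^ α ≤ (2 * a) ^ α := rpow_le_rpow (by linarith) (by linarith) hα
      _ = 2 ^ α * a ^ α := mul_rpow (by norm_num) ha
      _ ≤ 2 ^ α * (a ^ α + b ^ α) := by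
          have := rpow_nonneg hb α
          nlinarith

lemma rpow_le_one_add_cube {t α : ℝ} (ht : 0 ≤ t) (hα0 : 0 < α) (hα3 : α ≤ 3) :
    t ^ α ≤ 1 + t ^ 3 := by
  rcases le_total t 1 with h | h
  · have : t ^ α ≤ 1 := rpow_le_one ht h hα0.le
    nlinarith [pow_nonneg ht 3]
  · have h1 : t ^ α ≤ t ^ (3:ℝ) := rpow_le_rpow_of_exponent_le h hα3
    rw [show ((3:ℝ) = ((3:ℕ):ℝ)) by norm_num, Real.rpow_natCast] at h1
    norm_num at h1 ⊢
    linarith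

lemma pow5_le {t : ℝ} (ht : 0 ≤ t) : (1 + t) ^ 5 ≤ 32 * (1 + t ^ 8) := by
  rcases le_total t 1 with h | h
  · have h1 : (1 + t) ^ 5 ≤ 2 ^ 5 := by
      apply pow_le_pow_left₀ (by linarith) (by linarith)
    nlinarith [pow_nonneg ht 8]
  · have h1 : (1 + t) ^ 5 ≤ (2 * t) ^ 5 := by
      apply pow_le_pow_left₀ (by linarith) (by linarith)
    have h2 : t ^ 5 ≤ t ^ 8 := pow_le_pow_right₀ h (by norm_num)
    nlinarith

lemma cube_pow5_le {t : ℝ} (ht : 0 ≤ t) : (1 + t ^ 3) * (1 + t) ^ 5 ≤ 64 * (1 + t ^ 8) := by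
  rcases le_total t 1 with h | h
  · have h1 : (1 + t) ^ 5 ≤ 2 ^ 5 := pow_le_pow_left₀ (by linarith) (by linarith) 5
    have h2 : t ^ 3 ≤ 1 := pow_le_one₀ ht h
    have h3 : (0:ℝ) ≤ (1 + t) ^ 5 := by positivity
    nlinarith [pow_nonneg ht 8, pow_nonneg ht 3]
  · have h1 : (1 + t) ^ 5 ≤ (2 * t) ^ 5 := pow_le_pow_left₀ (by linarith) (by linarith) 5
    have h2 : (1 + t ^ 3) ≤ 2 * t ^ 3 := by
      nlinarith [pow_le_pow_right₀ h (show 0 ≤ 3 by norm_num)]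
    have h4 : (0:ℝ) < t := by linarith
    have h3 : t ^ 3 * t ^ 5 = t ^ 8 := by ring
    nlinarith [pow_pos h4 3, pow_pos h4 5, pow_pos h4 8,
      pow_le_pow_right₀ h (show (5:ℕ) ≤ 8 by norm_num)]

lemma kernel_integrableOn {α : ℝ} (hα0 : 0 < α) (hα3 : α < 3) :
    IntegrableOn (fun z : V3 => ‖z‖ ^ (-α)) (ball (0 : V3) 1) := by
  have hmeas : Measurable fun z : V3 => ‖z‖ ^ (-α) :=
    measurable_norm.pow_const _
  constructor
  · exact hmeas.aestronglyMeasurable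
  rw [hasFiniteIntegral_iff_ofReal (Eventually.of_forall fun z => rpow_nonneg (norm_nonneg _) _)]
  set ρ : ℝ := (2 : ℝ)⁻¹ with hρ
  have hρ0 : 0 < ρ := by norm_num
  have hρ1 : ρ < 1 := by norm_num
  set A : ℕ → Set V3 := fun n => ball (0 : V3) (ρ ^ n) \ ball (0 : V3) (ρ ^ (n + 1)) with hA
  have hsub : ball (0 : V3) 1 ⊆ (⋃ n, A n) ∪ {0} := by
    intro z hz
    rcases eq_or_ne z 0 with rfl | hz0
    · exact Or.inr rfl
    refine Or.inl ?_
    have hz1 : ‖z‖ < 1 := by simpa [mem_ball, dist_eq_norm] using hz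
    have hzpos : 0 < ‖z‖ := norm_pos_iff.2 hz0
    have hex : ∃ m : ℕ, ρ ^ (m + 1) ≤ ‖z‖ := by
      obtain ⟨m, hm⟩ := exists_pow_lt_of_lt_one hzpos hρ1
      exact ⟨m, le_trans (pow_le_pow_of_le_one hρ0.le hρ1.le (Nat.le_succ m)) hm.le⟩
    classical
    set n := Nat.find hex with hn
    have h1 : ρ ^ (n + 1) ≤ ‖z‖ := Nat.find_spec hex
    have h2 : ‖z‖ < ρ ^ n := by
      rcases Nat.eq_zero_or_pos n with h0 | hpos
      · rw [h0]; simpa using hz1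
      · have := Nat.find_min hex (m := n - 1) (by omega)
        push_neg at this
        have hn1 : n - 1 + 1 = n := by omega
        rwa [hn1] at this
    refine Set.mem_iUnion.2 ⟨n, ?_, ?_⟩
    · simpa [mem_ball, dist_eq_norm] using h2
    · simp only [Set.mem_setOf_eq, mem_ball, dist_eq_norm, sub_zero, not_lt]
      exact h1
  have hAmeas : ∀ n, MeasurableSet (A n) := fun n =>
    measurableSet_ball.diff measurableSet_ball
  set B := volume (ball (0 : V3) 1) with hB
  have hBlt : B < ⊤ := measure_ball_lt_top
  set q : ℝ := (2 : ℝ) ^ α with hq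
  have hq0 : 0 < q := rpow_pos_of_pos (by norm_num) _
  have hq8 : q < 8 := by
    have : (2:ℝ) ^ α < (2:ℝ) ^ (3:ℝ) := rpow_lt_rpow_of_exponent_lt one_lt_two hα3
    calc q < (2:ℝ) ^ (3:ℝ) := this
      _ = 8 := by
        rw [show ((3:ℝ) = ((3:ℕ):ℝ)) by norm_num, Real.rpow_natCast]; norm_num
  have hterm : ∀ n : ℕ, (∫⁻ z in A n, ENNReal.ofReal (‖z‖ ^ (-α)))
      ≤ ENNReal.ofReal (q * (q / 8) ^ n) * B := by
    intro n
    have hkey : ((ρ ^ (n+1) : ℝ)) ^ (-α) * (ρ ^ n) ^ 3 = q * (q / 8) ^ n := by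
      have h1 : ((ρ ^ (n+1) : ℝ)) ^ (-α) = q ^ (n + 1) := by
        rw [hρ, inv_pow, Real.inv_rpow (by positivity), Real.rpow_neg (by positivity), inv_inv,
          ← Real.rpow_natCast (2:ℝ) (n+1), ← Real.rpow_mul (by norm_num), mul_comm,
          Real.rpow_mul (by norm_num), Real.rpow_natCast]
      have h2 : ((ρ ^ n : ℝ)) ^ 3 = (8⁻¹ : ℝ) ^ n := by
        rw [← pow_mul, mul_comm, pow_mul, hρ]; norm_num
      rw [h1, h2, div_pow]
      field_simp
      rw [mul_assoc, ← mul_pow]; norm_num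
      ring
    calc (∫⁻ z in A n, ENNReal.ofReal (‖z‖ ^ (-α)))
        ≤ ∫⁻ _ in A n, ENNReal.ofReal ((ρ ^ (n+1)) ^ (-α)) := by
          refine setLIntegral_mono measurable_const fun z hz => ?_
          refine ENNReal.ofReal_le_ofReal ?_
          refine Real.rpow_le_rpow_of_nonpos (by positivity) ?_ (by linarith)
          have := hz.2
          simpa [mem_ball, dist_eq_norm, not_lt] using this
      _ = ENNReal.ofReal ((ρ ^ (n+1)) ^ (-α)) * volume (A n) := setLIntegral_const _ _
      _ ≤ ENNReal.ofReal ((ρ ^ (n+1)) ^ (-α)) * volume (ball (0:V3) (ρ ^ n)) := by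
          gcongr
          exact Set.diff_subset
      _ = ENNReal.ofReal ((ρ ^ (n+1)) ^ (-α)) * (ENNReal.ofReal ((ρ ^ n) ^ 3) * B) := by
          rw [Measure.addHaar_ball _ _ (by positivity)]
          congr
          simp [finrank_euclideanSpace]
      _ = ENNReal.ofReal (((ρ ^ (n+1) : ℝ)) ^ (-α) * (ρ ^ n) ^ 3) * B := by
          rw [ENNReal.ofReal_mul (by positivity), mul_assoc]
      _ = ENNReal.ofReal (q * (q / 8) ^ n) * B := by rw [hkey]
  have hsum : (∑' n : ℕ, ENNReal.ofReal (q * (q / 8) ^ n) * B) < ⊤ := by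
    have hr1 : ENNReal.ofReal (q / 8) < 1 := by
      rw [ENNReal.ofReal_lt_one]
      linarith [hq8]
    have : (∑' n : ℕ, ENNReal.ofReal (q * (q / 8) ^ n) * B)
        = ENNReal.ofReal q * (1 - ENNReal.ofReal (q / 8))⁻¹ * B := by
      rw [ENNReal.tsum_mul_right]
      congr 1
      calc (∑' n : ℕ, ENNReal.ofReal (q * (q / 8) ^ n))
          = ∑' n : ℕ, ENNReal.ofReal q * ENNReal.ofReal (q / 8) ^ n := by
            congr 1; funext n
            rw [ENNReal.ofReal_mul hq0.le, ENNReal.ofReal_pow (by positivity)]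
        _ = ENNReal.ofReal q * (1 - ENNReal.ofReal (q / 8))⁻¹ := by
            rw [ENNReal.tsum_mul_left, ENNReal.tsum_geometric]
    rw [this]
    refine ENNReal.mul_lt_top (ENNReal.mul_lt_top ENNReal.ofReal_lt_top ?_) hBlt
    exact ENNReal.inv_lt_top.2 (tsub_pos_of_lt hr1)
  calc (∫⁻ z in ball (0:V3) 1, ENNReal.ofReal (‖z‖ ^ (-α)))
      ≤ ∫⁻ z in (⋃ n, A n) ∪ {0}, ENNReal.ofReal (‖z‖ ^ (-α)) := lintegral_mono_set hsub
    _ ≤ (∫⁻ z in ⋃ n, A n, ENNReal.ofReal (‖z‖ ^ (-α)))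
        + ∫⁻ z in ({0} : Set V3), ENNReal.ofReal (‖z‖ ^ (-α)) := lintegral_union_le _ _ _
    _ = ∫⁻ z in ⋃ n, A n, ENNReal.ofReal (‖z‖ ^ (-α)) := by
        have h0 : volume.restrict ({0} : Set V3) = 0 := by
          rw [Measure.restrict_eq_zero]
          exact measure_singleton 0
        rw [h0]
        simp
    _ ≤ ∑' n : ℕ, ∫⁻ z in A n, ENNReal.ofReal (‖z‖ ^ (-α)) := lintegral_iUnion_le _ _
    _ ≤ ∑' n : ℕ, ENNReal.ofReal (q * (q / 8) ^ n) * B := ENNReal.tsum_le_tsum hterm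
    _ < ⊤ := hsum

end Stmt5Aux

open Stmt5Aux Metric Filter

theorem stmt5 (u : V3 → ℝ) (hu : Measurable u) (C : ℝ) (hC : 0 < C)
    (hdecay : ∀ x : V3, u x ^ 2 ≤ C / (1 + ‖x‖ ^ 8))
    (α : ℝ) (hα0 : 0 < α) (hα3 : α < 3) :
    ∃ C' : ℝ, 0 < C' ∧ ∀ x : V3,
      (∫ y, ‖x - y‖ ^ (-α) * u y ^ 2) ≤ C' / (1 + ‖x‖ ^ α) := by
  set w : V3 → ℝ := fun y => (1 + ‖y‖) ^ (-(5:ℝ)) with hwdef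
  have hw : Integrable w := by
    apply integrable_one_add_norm
    rw [finrank_euclideanSpace]
    norm_num
  have hw_nonneg : ∀ y : V3, 0 ≤ w y := fun y => rpow_nonneg (by positivity) _
  have hw_le_one : ∀ y : V3, w y ≤ 1 := fun y =>
    rpow_le_one_of_one_le_of_nonpos (by linarith [norm_nonneg y]) (by norm_num)
  have hw_eq : ∀ y : V3, w y = ((1 + ‖y‖) ^ (5:ℕ))⁻¹ := by
    intro y
    rw [show w y = ((1:ℝ) + ‖y‖) ^ (-(5:ℝ)) from rfl,
      show (-(5:ℝ)) = -((5:ℕ):ℝ) by norm_num, Real.rpow_neg (by positivity),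
      Real.rpow_natCast]
  set f : V3 → ℝ := (ball (0:V3) 1).indicator (fun z => ‖z‖ ^ (-α)) with hfdef
  have hf : Integrable f :=
    (integrable_indicator_iff measurableSet_ball).2 (kernel_integrableOn hα0 hα3)
  have hf_nonneg : ∀ z : V3, 0 ≤ f z := fun z =>
    Set.indicator_nonneg (fun z _ => rpow_nonneg (norm_nonneg _) _) z
  have h2α : (0:ℝ) < 2 ^ α := rpow_pos_of_pos (by norm_num) _
  set M : ℝ := 64 * C * (1 + 2 ^ α) with hM
  have hM0 : 0 < M := by positivity
  have hden : ∀ t : ℝ, 0 ≤ t → (0:ℝ) < 1 + t ^ 8 := fun t ht => by positivity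
  -- (a)
  have hUa : ∀ y : V3, u y ^ 2 ≤ 32 * C * w y := by
    intro y
    set t := ‖y‖ with hT
    have ht : 0 ≤ t := norm_nonneg _
    have hpos5 : (0:ℝ) < (1 + t) ^ 5 := by positivity
    refine le_trans (hdecay y) ?_
    rw [hw_eq y]
    rw [div_le_iff₀ (hden t ht)]
    have := pow5_le ht
    calc C = C * 1 := (mul_one C).symm
      _ ≤ C * (32 * (1 + t ^ 8) * ((1 + t) ^ 5)⁻¹) := by
          rw [mul_le_mul_iff_right₀ hC]
          rw [le_mul_inv_iff₀ hpos5, one_mul]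
          linarith
      _ = 32 * C * ((1 + t) ^ (5:ℕ))⁻¹ * (1 + t ^ 8) := by ring
  -- (b)
  have hUb : ∀ y : V3, ‖y‖ ^ α * u y ^ 2 ≤ 64 * C * w y := by
    intro y
    set t := ‖y‖ with hT
    have ht : 0 ≤ t := norm_nonneg _
    have hpos5 : (0:ℝ) < (1 + t) ^ 5 := by positivity
    have htα : 0 ≤ t ^ α := rpow_nonneg ht _
    have hC8 : 0 ≤ C / (1 + t ^ 8) := div_nonneg hC.le (hden t ht).le
    calc t ^ α * u y ^ 2 ≤ t ^ α * (C / (1 + t ^ 8)) := by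
          exact mul_le_mul_of_nonneg_left (hdecay y) htα
      _ ≤ (1 + t ^ 3) * (C / (1 + t ^ 8)) := by
          exact mul_le_mul_of_nonneg_right (rpow_le_one_add_cube ht hα0 hα3.le) hC8
      _ ≤ 64 * C * w y := by
          rw [hw_eq y]
          rw [mul_div_assoc', div_le_iff₀ (hden t ht)]
          have hc := cube_pow5_le ht
          calc (1 + t ^ 3) * C = C * ((1 + t ^ 3) * (1 + t) ^ 5) * ((1 + t) ^ 5)⁻¹ := by
                field_simp
              _ ≤ C * (64 * (1 + t ^ 8)) * ((1 + t) ^ 5)⁻¹ := by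
                gcongr
              _ = 64 * C * ((1 + t) ^ (5:ℕ))⁻¹ * (1 + t ^ 8) := by
                field_simp
  -- core pointwise bound
  have hcore : ∀ x y : V3,
      (1 + ‖x‖ ^ α) * (‖x - y‖ ^ (-α) * u y ^ 2) ≤ M * (f (x - y) + 2 * w y) := by
    intro x y
    set r := ‖x - y‖ with hr
    set t := ‖y‖ with ht
    have hr0 : 0 ≤ r := norm_nonneg _
    have ht0 : 0 ≤ t := norm_nonneg _
    set P := r ^ (-α) with hP
    have hP0 : 0 ≤ P := rpow_nonneg hr0 _
    have hU0 : 0 ≤ u y ^ 2 := sq_nonneg _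
    have hsplit : 1 + ‖x‖ ^ α ≤ 1 + 2 ^ α * r ^ α + 2 ^ α * t ^ α := by
      have hxle : ‖x‖ ≤ r + t := by
        calc ‖x‖ = ‖(x - y) + y‖ := by rw [sub_add_cancel]
          _ ≤ r + t := norm_add_le _ _
      have h1 : ‖x‖ ^ α ≤ (r + t) ^ α := rpow_le_rpow (norm_nonneg _) hxle hα0.le
      have h2 := rpow_add_le_aux hr0 ht0 hα0.le
      nlinarith [h2α.le]
    have hPr : r ^ α * P ≤ 1 := by
      rcases eq_or_lt_of_le hr0 with h0 | hpos
      · have hz : r ^ α = 0 := by rw [← h0, Real.zero_rpow hα0.ne']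
        rw [hz, zero_mul]
        norm_num
      · rw [hP, ← Real.rpow_add hpos]
        simp
    have hwy0 : 0 ≤ w y := hw_nonneg y
    have hbig : (1 + ‖x‖ ^ α) * (P * u y ^ 2) ≤ M * (P * w y) + M * w y := by
      have step1 : (1 + ‖x‖ ^ α) * (P * u y ^ 2)
          ≤ (1 + 2 ^ α * r ^ α + 2 ^ α * t ^ α) * (P * u y ^ 2) := by
        exact mul_le_mul_of_nonneg_right hsplit (mul_nonneg hP0 hU0)
      have hrα : 0 ≤ r ^ α := rpow_nonneg hr0 _
      have htα : 0 ≤ t ^ α := rpow_nonneg ht0 _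
      have e1 : P * u y ^ 2 ≤ P * (32 * C * w y) :=
        mul_le_mul_of_nonneg_left (hUa y) hP0
      have e2 : 2 ^ α * r ^ α * (P * u y ^ 2) ≤ 2 ^ α * (32 * C * w y) := by
        have : r ^ α * P * u y ^ 2 ≤ 1 * u y ^ 2 := mul_le_mul_of_nonneg_right hPr hU0
        have h' : r ^ α * (P * u y ^ 2) ≤ u y ^ 2 := by nlinarith
        calc 2 ^ α * r ^ α * (P * u y ^ 2) = 2 ^ α * (r ^ α * (P * u y ^ 2)) := by ring
          _ ≤ 2 ^ α * u y ^ 2 := mul_le_mul_of_nonneg_left h' h2α.le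
          _ ≤ 2 ^ α * (32 * C * w y) := mul_le_mul_of_nonneg_left (hUa y) h2α.le
      have e3 : 2 ^ α * t ^ α * (P * u y ^ 2) ≤ 2 ^ α * (64 * C * w y) * P := by
        have h' : t ^ α * u y ^ 2 ≤ 64 * C * w y := hUb y
        calc 2 ^ α * t ^ α * (P * u y ^ 2) = 2 ^ α * (t ^ α * u y ^ 2) * P := by ring
          _ ≤ 2 ^ α * (64 * C * w y) * P := by
              refine mul_le_mul_of_nonneg_right ?_ hP0
              exact mul_le_mul_of_nonneg_left h' h2α.le
      have hPw : 0 ≤ P * w y := mul_nonneg hP0 hwy0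
      calc (1 + ‖x‖ ^ α) * (P * u y ^ 2)
          ≤ (1 + 2 ^ α * r ^ α + 2 ^ α * t ^ α) * (P * u y ^ 2) := step1
        _ = P * u y ^ 2 + 2 ^ α * r ^ α * (P * u y ^ 2)
            + 2 ^ α * t ^ α * (P * u y ^ 2) := by ring
        _ ≤ P * (32 * C * w y) + 2 ^ α * (32 * C * w y) + 2 ^ α * (64 * C * w y) * P := by
            linarith [e1, e2, e3]
        _ ≤ M * (P * w y) + M * w y := by
            rw [hM]
            nlinarith [hPw, hwy0, h2α.le, hC.le, mul_nonneg (mul_nonneg hC.le h2α.le) hPw,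
              mul_nonneg (mul_nonneg hC.le h2α.le) hwy0]
    have hPf : P * w y + w y ≤ f (x - y) + 2 * w y := by
      rcases lt_or_ge r 1 with hlt | hge
      · have hmem : x - y ∈ ball (0:V3) 1 := by
          simp [mem_ball, dist_eq_norm]
          exact hlt
        have hfval : f (x - y) = P := by
          rw [hfdef, Set.indicator_of_mem hmem]
        have : P * w y ≤ P := by
          calc P * w y ≤ P * 1 := mul_le_mul_of_nonneg_left (hw_le_one y) hP0
            _ = P := mul_one P
        linarith [hfval.ge, hfval.le]
      · have hP1 : P ≤ 1 := rpow_le_one_of_one_le_of_nonpos hge (by linarith)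
        have : P * w y ≤ w y := by
          calc P * w y ≤ 1 * w y := mul_le_mul_of_nonneg_right hP1 hwy0
            _ = w y := one_mul _
        linarith [hf_nonneg (x - y)]
    calc (1 + ‖x‖ ^ α) * (P * u y ^ 2) ≤ M * (P * w y) + M * w y := hbig
      _ = M * (P * w y + w y) := by ring
      _ ≤ M * (f (x - y) + 2 * w y) := mul_le_mul_of_nonneg_left hPf hM0.le
  -- assembly
  set K : ℝ := (∫ z, f z) + 2 * ∫ y, w y with hK
  have hIf : 0 ≤ ∫ z, f z := integral_nonneg hf_nonneg
  have hIw : 0 ≤ ∫ y, w y := integral_nonneg hw_nonneg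
  have hK0 : 0 ≤ K := by rw [hK]; linarith
  refine ⟨M * K + 1, by nlinarith, fun x => ?_⟩
  have hxα : 0 ≤ ‖x‖ ^ α := rpow_nonneg (norm_nonneg x) _
  have hd : (0:ℝ) < 1 + ‖x‖ ^ α := by linarith
  rw [le_div_iff₀ hd]
  have hmaj : Integrable (fun y : V3 => M * (f (x - y) + 2 * w y)) :=
    ((hf.comp_sub_left x).add (hw.const_mul 2)).const_mul M
  have hrw : (∫ y, ‖x - y‖ ^ (-α) * u y ^ 2) * (1 + ‖x‖ ^ α)
      = ∫ y, (1 + ‖x‖ ^ α) * (‖x - y‖ ^ (-α) * u y ^ 2) := by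
    rw [integral_const_mul]
    ring
  rw [hrw]
  have hmono : (∫ y, (1 + ‖x‖ ^ α) * (‖x - y‖ ^ (-α) * u y ^ 2))
      ≤ ∫ y, M * (f (x - y) + 2 * w y) := by
    refine integral_mono_of_nonneg ?_ hmaj ?_
    · refine Eventually.of_forall fun y => ?_
      have : 0 ≤ ‖x - y‖ ^ (-α) * u y ^ 2 :=
        mul_nonneg (rpow_nonneg (norm_nonneg _) _) (sq_nonneg _)
      positivity
    · exact Eventually.of_forall fun y => hcore x y
  have hval : (∫ y, M * (f (x - y) + 2 * w y)) = M * K := by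
    rw [integral_const_mul, integral_add (hf.comp_sub_left x) (hw.const_mul 2),
      integral_sub_left_eq_self f volume x, integral_const_mul, hK]
  calc (∫ y, (1 + ‖x‖ ^ α) * (‖x - y‖ ^ (-α) * u y ^ 2))
      ≤ ∫ y, M * (f (x - y) + 2 * w y) := hmono
    _ = M * K := hval
    _ ≤ M * K + 1 := by linarith
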